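/- For $n\ge 5$, the cohomology classes of the cocycles $\Omega_{n+1}=\frac{1}{2}\sum_{i+j=n+1}(j-i)e^i\wedge e^j$, $e^2\wedge e^3$, and $e^2\wedge e^5 - 3e^3\wedge e^4$ form a basis of $H^2(\mathcal{V}_n;\mathbb{K})$; in particular $\dim H^2(\mathcal{V}_n)=3$. -/

import Mathlib

/-- Structure constants of `𝒱ₙ` with respect to the (zero-based) basis
`e₁, …, eₙ`: `[eᵢ, eⱼ] = (j-i) e_{i+j}` for `i+j ≤ n`, zero otherwise. -/
def Vc (K : Type*) [Field K] (n : ℕ) (i j l : Fin n) : K :=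
  if l.val = i.val + j.val + 1 then (((j.val : ℤ) - (i.val : ℤ) : ℤ) : K) else 0

/-- Chevalley–Eilenberg closedness for a 2-cochain on `𝒱ₙ` given by its matrix. -/
def VClosed (K : Type*) [Field K] (n : ℕ) (a : Fin n → Fin n → K) : Prop :=
  ∀ i j l : Fin n,
    (∑ m, Vc K n i j m * a m l) + (∑ m, Vc K n j l m * a m i)
      + (∑ m, Vc K n l i m * a m j) = 0

/-- The matrices of the three cocycles `Ω_{n+1} = (1/2) ∑_{i+j=n+1} (j-i) eⁱ∧eʲ`,
`e²∧e³` and `e²∧e⁵ - 3 e³∧e⁴` (zero-based indices). -/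
def VOmega (K : Type*) [Field K] (n : ℕ) (k : Fin 3) (p q : Fin n) : K :=
  if k.val = 0 then
    (if p.val + q.val = n - 1 then (((q.val : ℤ) - (p.val : ℤ) : ℤ) : K) else 0)
  else if k.val = 1 then
    (if p.val = 1 ∧ q.val = 2 then 1 else if p.val = 2 ∧ q.val = 1 then -1 else 0)
  else
    (if p.val = 1 ∧ q.val = 4 then 1 else if p.val = 4 ∧ q.val = 1 then -1
     else if p.val = 2 ∧ q.val = 3 then -3 else if p.val = 3 ∧ q.val = 2 then 3 else 0)

set_option linter.unusedSectionVars false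

namespace S

variable {K : Type*} [Field K] [CharZero K]



/-- `ℤ`-indexed version of a 2-cochain matrix (`1`-based indices). -/
def Tz (K : Type*) [Field K] (n : ℕ) (a : Fin n → Fin n → K) (p q : ℤ) : K :=
  if h : 1 ≤ p ∧ p ≤ (n : ℤ) ∧ 1 ≤ q ∧ q ≤ (n : ℤ) then
    a ⟨(p - 1).toNat, by omega⟩ ⟨(q - 1).toNat, by omega⟩ else 0

/-- closedness in the `ℤ`-indexed world -/
def EZ (K : Type*) [Field K] (n : ℕ) (B : ℤ → ℤ → K) : Prop :=
  ∀ i j l : ℤ, 1 ≤ i → i ≤ (n : ℤ) → 1 ≤ j → j ≤ (n : ℤ) → 1 ≤ l → l ≤ (n : ℤ) →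
    ((j - i : ℤ) : K) * B (i + j) l + ((l - j : ℤ) : K) * B (j + l) i
      + ((i - l : ℤ) : K) * B (l + i) j = 0

lemma sum_Vc (n : ℕ) (i j : Fin n) (g : Fin n → K) :
    (∑ m, Vc K n i j m * g m) =
      if h : i.val + j.val + 1 < n then
        (((j.val : ℤ) - (i.val : ℤ) : ℤ) : K) * g ⟨i.val + j.val + 1, h⟩ else 0 := by
  split_ifs with h
  · rw [Finset.sum_eq_single (⟨i.val + j.val + 1, h⟩ : Fin n)]
    · simp [Vc]
    · intro b _ hb
      rw [Vc, if_neg, zero_mul]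
      intro hv; exact hb (Fin.ext hv)
    · simp
  · apply Finset.sum_eq_zero
    intro m _
    rw [Vc, if_neg, zero_mul]
    have := m.isLt; omega

lemma sum_Vc_Tz (n : ℕ) (a : Fin n → Fin n → K) (i j l : Fin n) :
    (∑ m, Vc K n i j m * a m l) =
      (((j.val : ℤ) - (i.val : ℤ) : ℤ) : K)
        * Tz K n a ((i.val : ℤ) + (j.val : ℤ) + 2) ((l.val : ℤ) + 1) := by
  have hi := i.isLt; have hj := j.isLt; have hl := l.isLt
  rw [sum_Vc]
  by_cases hc : i.val + j.val + 1 < n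
  · rw [dif_pos hc, Tz, dif_pos ⟨by omega, by omega, by omega, by omega⟩]
    congr 1
    exact congrArg₂ a (Fin.ext (by simp only [Fin.val_mk]; omega))
      (Fin.ext (by simp only [Fin.val_mk]; omega))
  · rw [dif_neg hc, Tz, dif_neg (by omega), mul_zero]

lemma vclosed_of (n : ℕ) (a : Fin n → Fin n → K) (h : EZ K n (Tz K n a)) :
    VClosed K n a := by
  intro i j l
  have hi := i.isLt; have hj := j.isLt; have hl := l.isLt
  rw [sum_Vc_Tz, sum_Vc_Tz, sum_Vc_Tz]
  have e := h ((i.val : ℤ) + 1) ((j.val : ℤ) + 1) ((l.val : ℤ) + 1)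
    (by omega) (by omega) (by omega) (by omega) (by omega) (by omega)
  rw [show ((i.val : ℤ) + 1) + ((j.val : ℤ) + 1) = (i.val : ℤ) + (j.val : ℤ) + 2 from by ring,
      show ((j.val : ℤ) + 1) + ((l.val : ℤ) + 1) = (j.val : ℤ) + (l.val : ℤ) + 2 from by ring,
      show ((l.val : ℤ) + 1) + ((i.val : ℤ) + 1) = (l.val : ℤ) + (i.val : ℤ) + 2 from by ring] at e
  push_cast at e ⊢
  linear_combination e

lemma vclosed_to (n : ℕ) (a : Fin n → Fin n → K) (h : VClosed K n a) :
    EZ K n (Tz K n a) := by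
  intro i j l hi1 hi2 hj1 hj2 hl1 hl2
  have e := h ⟨(i - 1).toNat, by omega⟩ ⟨(j - 1).toNat, by omega⟩ ⟨(l - 1).toNat, by omega⟩
  rw [sum_Vc_Tz, sum_Vc_Tz, sum_Vc_Tz] at e
  simp only [Fin.val_mk] at e
  rw [Int.toNat_of_nonneg (by omega : (0:ℤ) ≤ i - 1),
      Int.toNat_of_nonneg (by omega : (0:ℤ) ≤ j - 1),
      Int.toNat_of_nonneg (by omega : (0:ℤ) ≤ l - 1)] at e
  rw [show (i - 1) + (j - 1) + 2 = i + j from by ring,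
      show (j - 1) + (l - 1) + 2 = j + l from by ring,
      show (l - 1) + (i - 1) + 2 = l + i from by ring,
      show (l - 1) + 1 = l from by ring,
      show (i - 1) + 1 = i from by ring,
      show (j - 1) + 1 = j from by ring] at e
  push_cast at e ⊢
  linear_combination e


def z0 (n : ℕ) (p q : ℤ) : ℤ :=
  if 1 ≤ p ∧ p ≤ (n:ℤ) ∧ 1 ≤ q ∧ q ≤ (n:ℤ) ∧ p + q = (n:ℤ) + 1 then q - p else 0

def z1 (p q : ℤ) : ℤ := if p = 2 ∧ q = 3 then 1 else if p = 3 ∧ q = 2 then -1 else 0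

def z2 (p q : ℤ) : ℤ :=
  if p = 2 ∧ q = 5 then 1 else if p = 5 ∧ q = 2 then -1
  else if p = 3 ∧ q = 4 then -3 else if p = 4 ∧ q = 3 then 3 else 0


lemma z0_id (n : ℕ) (i j l : ℤ) (hi1 : 1 ≤ i) (hi2 : i ≤ (n:ℤ)) (hj1 : 1 ≤ j)
    (hj2 : j ≤ (n:ℤ)) (hl1 : 1 ≤ l) (hl2 : l ≤ (n:ℤ)) :
    (j - i) * z0 n (i + j) l + (l - j) * z0 n (j + l) i + (i - l) * z0 n (l + i) j = 0 := by
  unfold z0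
  split_ifs <;> first | ring1 | (exfalso; omega)

set_option maxHeartbeats 1000000 in
lemma z1_id (i j l : ℤ) (hi1 : 1 ≤ i) (hj1 : 1 ≤ j) (hl1 : 1 ≤ l) :
    (j - i) * z1 (i + j) l + (l - j) * z1 (j + l) i + (i - l) * z1 (l + i) j = 0 := by
  unfold z1
  split_ifs <;> omega

set_option maxHeartbeats 4000000 in
lemma z2_id (i j l : ℤ) (hi1 : 1 ≤ i) (hj1 : 1 ≤ j) (hl1 : 1 ≤ l) :
    (j - i) * z2 (i + j) l + (l - j) * z2 (j + l) i + (i - l) * z2 (l + i) j = 0 := by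
  unfold z2
  split_ifs <;> omega

lemma z0_anti (n : ℕ) (p q : ℤ) : z0 n p q = -(z0 n q p) := by
  unfold z0; split_ifs <;> omega

lemma z1_anti (p q : ℤ) : z1 p q = -(z1 q p) := by
  unfold z1; split_ifs <;> omega

lemma z2_anti (p q : ℤ) : z2 p q = -(z2 q p) := by
  unfold z2; split_ifs <;> omega

lemma cast_mul_eq_zero {x : ℤ} {c : K} (h : ((x : ℤ) : K) * c = 0) (hx : x ≠ 0) : c = 0 :=
  (mul_eq_zero.mp h).resolve_left (Int.cast_ne_zero.mpr hx)

lemma keyW (n : ℕ) (hn : 5 ≤ n) (w : ℤ) (c : ℤ → K)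
    (hr : ∀ p : ℤ, p < 1 ∨ (n:ℤ) < p ∨ w - p < 1 ∨ (n:ℤ) < w - p → c p = 0)
    (ha : ∀ p : ℤ, c (w - p) = - c p)
    (hE : ∀ i j l : ℤ, 1 ≤ i → i ≤ (n:ℤ) → 1 ≤ j → j ≤ (n:ℤ) → 1 ≤ l → l ≤ (n:ℤ) →
      i + j + l = w →
      ((j - i : ℤ):K) * c l + ((l - j : ℤ):K) * c i + ((i - l : ℤ):K) * c j = 0)
    (h1 : c 1 = 0) (h5 : w = 5 → c 2 = 0) (h7 : w = 7 → c 2 = 0) :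
    ∀ p, c p = 0 := by
  have h2 : c 2 = 0 := by
    by_cases hw5 : w = 5
    · exact h5 hw5
    by_cases hw7 : w = 7
    · exact h7 hw7
    by_cases hlow : w ≤ 2 ∨ (n:ℤ) + 3 ≤ w
    · exact hr 2 (by omega)
    by_cases hw3 : w = 3
    · have := ha 1
      rw [h1, hw3] at this
      norm_num at this
      exact this
    by_cases hw4 : w = 4
    · have := ha 2
      rw [hw4] at this
      norm_num at this
      have h2' : ((2 : ℤ) : K) * c 2 = 0 := by push_cast; linear_combination this
      exact cast_mul_eq_zero h2' (by norm_num)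
    -- now 6 ≤ w ≤ n + 2, w ≠ 7
    have hw6 : 6 ≤ w := by omega
    have hwn : w ≤ (n:ℤ) + 2 := by omega
    have e1 := hE 1 2 (w-3) (by omega) (by omega) (by omega) (by omega) (by omega) (by omega)
      (by ring)
    have e2 := hE 1 3 (w-4) (by omega) (by omega) (by omega) (by omega) (by omega) (by omega)
      (by ring)
    have e3 := hE 1 4 (w-5) (by omega) (by omega) (by omega) (by omega) (by omega) (by omega)
      (by ring)
    have e4 := hE 2 3 (w-5) (by omega) (by omega) (by omega) (by omega) (by omega) (by omega)
      (by ring)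
    have a3 := ha 3
    have a4 := ha 4
    have a5 := ha 5
    have key : ((w * (w - 2) * (w - 7) : ℤ) : K) * c 2 = 0 := by
      push_cast at e1 e2 e3 e4 ⊢
      linear_combination
        ((((w:ℤ):K) - 6) * (5 - ((w:ℤ):K)) + 6 * (7 - ((w:ℤ):K))) * e1
          + (((w:ℤ):K) - 6) * e2 + (-2 : K) * e3 + (6 : K) * e4
          - ((((w:ℤ):K) - 6) * (5 - ((w:ℤ):K)) + 6 * (7 - ((w:ℤ):K))) * a3
          - 2 * (((w:ℤ):K) - 6) * a4
          - (((((w:ℤ):K) - 6) * (5 - ((w:ℤ):K)) + 6 * (7 - ((w:ℤ):K))) * (((w:ℤ):K) - 5)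
              + (((w:ℤ):K) - 6) * (((w:ℤ):K) - 7) + (-2 : K) * (((w:ℤ):K) - 9)) * h1
    exact cast_mul_eq_zero key (by
      apply mul_ne_zero (mul_ne_zero _ _) <;> omega)
  have main : ∀ p : ℤ, 2 ≤ p → c p = 0 := by
    refine Int.le_induction h2 ?_
    intro p hp ih
    · by_cases hout : p + 1 < 1 ∨ (n:ℤ) < p + 1 ∨ w - (p+1) < 1 ∨ (n:ℤ) < w - (p+1)
      · exact hr _ hout
      · push_neg at hout
        have e := hE 1 p (w-1-p) (by omega) (by omega) (by omega) (by omega) (by omega)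
          (by omega) (by ring)
        have aa := ha (p+1)
        rw [show w-1-p = w-(p+1) from by ring] at e
        rw [aa, h1, ih] at e
        have h0 : ((p - 1 : ℤ) : K) * c (p + 1) = 0 := by
          push_cast at e ⊢
          linear_combination -e
        exact cast_mul_eq_zero h0 (by omega)
  intro p
  rcases (show p ≤ 0 ∨ p = 1 ∨ 2 ≤ p by omega) with h | h | h
  · exact hr p (by omega)
  · rw [h]; exact h1
  · exact main p h


-- ## the construction

/-- coefficient of `Ω_{n+1}` -/
noncomputable def c0v (n : ℕ) (A : ℤ → ℤ → K) : K := A 1 (n:ℤ) / ((n:K) - 1)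

/-- the normalizing cochain -/
noncomputable def fv (n : ℕ) (A : ℤ → ℤ → K) : ℤ → K := fun w =>
  if 3 ≤ w ∧ w ≤ (n:ℤ) then
    (A 1 (w-1) - c0v n A * ((z0 n 1 (w-1) : ℤ) : K)) / ((w : K) - 2) else 0

/-- coboundary of a `1`-cochain, `ℤ`-indexed -/
def ZdfF (K : Type*) [Field K] (n : ℕ) (f : ℤ → K) : ℤ → ℤ → K := fun p q =>
  if 1 ≤ p ∧ p ≤ (n:ℤ) ∧ 1 ≤ q ∧ q ≤ (n:ℤ) then ((q - p : ℤ) : K) * f (p + q) else 0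

noncomputable def c1v (n : ℕ) (A : ℤ → ℤ → K) : K :=
  A 2 3 - c0v n A * ((z0 n 2 3 : ℤ) : K) - ZdfF K n (fv n A) 2 3

noncomputable def c2v (n : ℕ) (A : ℤ → ℤ → K) : K :=
  A 2 5 - c0v n A * ((z0 n 2 5 : ℤ) : K) - ZdfF K n (fv n A) 2 5

/-- the residual -/
noncomputable def Rres (n : ℕ) (A : ℤ → ℤ → K) : ℤ → ℤ → K := fun p q =>
  A p q - c0v n A * ((z0 n p q : ℤ) : K) - c1v n A * ((z1 p q : ℤ) : K)
    - c2v n A * ((z2 p q : ℤ) : K) - ZdfF K n (fv n A) p q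

lemma Zdf_anti (n : ℕ) (f : ℤ → K) (p q : ℤ) : ZdfF K n f p q = -(ZdfF K n f q p) := by
  unfold ZdfF
  split_ifs with h1 h2 h2
  · rw [add_comm q p]; push_cast; ring
  · exfalso; omega
  · exfalso; omega
  · rw [neg_zero]

lemma fv_support (n : ℕ) (A : ℤ → ℤ → K) (w : ℤ) (hw : (n:ℤ) < w) : fv n A w = 0 := by
  unfold fv; rw [if_neg]; omega

lemma EZ_Zdf (n : ℕ) (f : ℤ → K) (hf : ∀ w, (n:ℤ) < w → f w = 0) : EZ K n (ZdfF K n f) := by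
  intro i j l hi1 hi2 hj1 hj2 hl1 hl2
  unfold ZdfF
  rw [show j + l + i = i + j + l from by ring, show l + i + j = i + j + l from by ring]
  by_cases hw : i + j + l ≤ (n:ℤ)
  · rw [if_pos ⟨by omega, by omega, by omega, by omega⟩,
        if_pos ⟨by omega, by omega, by omega, by omega⟩,
        if_pos ⟨by omega, by omega, by omega, by omega⟩]
    push_cast
    ring
  · have hz : f (i + j + l) = 0 := hf _ (by omega)
    rw [hz]
    split_ifs <;> ring

lemma EZ_z0 (n : ℕ) : EZ K n (fun p q => ((z0 n p q : ℤ) : K)) := by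
  intro i j l hi1 hi2 hj1 hj2 hl1 hl2
  simp only []
  exact_mod_cast congrArg (fun x : ℤ => (x : K)) (z0_id n i j l hi1 hi2 hj1 hj2 hl1 hl2)

lemma EZ_z1 (n : ℕ) : EZ K n (fun p q => ((z1 p q : ℤ) : K)) := by
  intro i j l hi1 hi2 hj1 hj2 hl1 hl2
  simp only []
  exact_mod_cast congrArg (fun x : ℤ => (x : K)) (z1_id i j l hi1 hj1 hl1)

lemma EZ_z2 (n : ℕ) : EZ K n (fun p q => ((z2 p q : ℤ) : K)) := by
  intro i j l hi1 hi2 hj1 hj2 hl1 hl2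
  simp only []
  exact_mod_cast congrArg (fun x : ℤ => (x : K)) (z2_id i j l hi1 hj1 hl1)

section Main

variable (n : ℕ) (hn : 5 ≤ n) (A : ℤ → ℤ → K)
  (hA0 : ∀ p q : ℤ, ¬(1 ≤ p ∧ p ≤ (n:ℤ) ∧ 1 ≤ q ∧ q ≤ (n:ℤ)) → A p q = 0)
  (hAa : ∀ p q, A p q = - A q p)
  (hAc : EZ K n A)

include hn hA0 hAa hAc

lemma mainZ : ∀ p q : ℤ, A p q =
    c0v n A * ((z0 n p q : ℤ) : K) + c1v n A * ((z1 p q : ℤ) : K)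
      + c2v n A * ((z2 p q : ℤ) : K) + ZdfF K n (fv n A) p q := by
  have hn1 : ((n:ℤ) : K) - 1 ≠ 0 := by
    rw [show ((n:ℤ) : K) - 1 = (((n:ℤ) - 1 : ℤ) : K) from by push_cast; ring]
    exact Int.cast_ne_zero.mpr (by omega)
  -- antisymmetry of the residual
  have hRa : ∀ x y, Rres n A x y = - Rres n A y x := by
    intro x y
    unfold Rres
    rw [hAa x y, z0_anti n x y, z1_anti x y, z2_anti x y, Zdf_anti n _ x y]
    push_cast
    ring
  -- residual vanishes out of range
  have hRr : ∀ x y, ¬(1 ≤ x ∧ x ≤ (n:ℤ) ∧ 1 ≤ y ∧ y ≤ (n:ℤ)) → Rres n A x y = 0 := by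
    intro x y h
    have hz0 : z0 n x y = 0 := by unfold z0; rw [if_neg]; omega
    have hz1 : z1 x y = 0 := by
      unfold z1; split_ifs <;> first | rfl | (exfalso; omega)
    have hz2 : z2 x y = 0 := by
      unfold z2; split_ifs <;> first | rfl | (exfalso; omega)
    have hzd : ZdfF K n (fv n A) x y = 0 := by unfold ZdfF; rw [if_neg h]
    unfold Rres
    rw [hA0 x y h, hz0, hz1, hz2, hzd]
    norm_num
  -- residual is closed
  have hRc : EZ K n (Rres n A) := by
    intro i j l hi1 hi2 hj1 hj2 hl1 hl2
    have e := hAc i j l hi1 hi2 hj1 hj2 hl1 hl2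
    have e0 := EZ_z0 (K := K) n i j l hi1 hi2 hj1 hj2 hl1 hl2
    have e1 := EZ_z1 (K := K) n i j l hi1 hi2 hj1 hj2 hl1 hl2
    have e2 := EZ_z2 (K := K) n i j l hi1 hi2 hj1 hj2 hl1 hl2
    have ed := EZ_Zdf n (fv n A) (fv_support n A) i j l hi1 hi2 hj1 hj2 hl1 hl2
    simp only [Rres]
    linear_combination e - c0v n A * e0 - c1v n A * e1 - c2v n A * e2 - ed
  -- first column of the residual vanishes
  have hR1 : ∀ y : ℤ, Rres n A 1 y = 0 := by
    intro y
    rcases (show y < 1 ∨ (n:ℤ) < y ∨ y = 1 ∨ ((2:ℤ) ≤ y ∧ y ≤ (n:ℤ) - 1) ∨ y = (n:ℤ)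
        by omega) with h | h | h | h | h
    · exact hRr 1 y (by omega)
    · exact hRr 1 y (by omega)
    · -- diagonal
      rw [h]
      have := hRa 1 1
      have h2 : (2:K) * Rres n A 1 1 = 0 := by linear_combination this
      have h2' : ((2:ℤ):K) * Rres n A 1 1 = 0 := by push_cast; linear_combination h2
      exact (mul_eq_zero.mp h2').resolve_left (Int.cast_ne_zero.mpr (by norm_num))
    · -- 2 ≤ y ≤ n-1 : weight w = y+1 ∈ [3,n]
      have hz1 : z1 1 y = 0 := by unfold z1; split_ifs <;> first | rfl | (exfalso; omega)
      have hz2 : z2 1 y = 0 := by unfold z2; split_ifs <;> first | rfl | (exfalso; omega)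
      have hzd : ZdfF K n (fv n A) 1 y
          = (A 1 y - c0v n A * ((z0 n 1 y : ℤ) : K)) := by
        unfold ZdfF
        rw [if_pos ⟨by omega, by omega, by omega, by omega⟩]
        unfold fv
        rw [if_pos ⟨by omega, by omega⟩]
        rw [show (1:ℤ) + y - 1 = y from by ring]
        have hd : ((1 + y : ℤ) : K) - 2 ≠ 0 := by
          rw [show ((1 + y : ℤ) : K) - 2 = ((y - 1 : ℤ) : K) from by push_cast; ring]
          exact Int.cast_ne_zero.mpr (by omega)
        rw [show ((y - 1 : ℤ) : K) = ((1 + y : ℤ) : K) - 2 from by push_cast; ring,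
          mul_comm, div_mul_cancel₀ _ hd]
      unfold Rres
      rw [hz1, hz2, hzd]
      push_cast
      ring
    · -- y = n : weight n+1
      rw [h]
      have hz0 : z0 n 1 (n:ℤ) = (n:ℤ) - 1 := by
        unfold z0; rw [if_pos ⟨by omega, by omega, by omega, by omega, by omega⟩]
      have hz1 : z1 1 (n:ℤ) = 0 := by unfold z1; split_ifs <;> first | rfl | (exfalso; omega)
      have hz2 : z2 1 (n:ℤ) = 0 := by unfold z2; split_ifs <;> first | rfl | (exfalso; omega)
      have hzd : ZdfF K n (fv n A) 1 (n:ℤ) = 0 := by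
        unfold ZdfF
        rw [if_pos ⟨by omega, by omega, by omega, by omega⟩, fv_support n A _ (by omega),
          mul_zero]
      unfold Rres c0v
      rw [hz0, hz1, hz2, hzd]
      rw [show ((((n:ℤ) - 1 : ℤ)) : K) = ((n:K) - 1) from by push_cast; ring,
        div_mul_cancel₀ _ (show (n:K) - 1 ≠ 0 from by
          rw [show (n:K) - 1 = (((n:ℤ) - 1 : ℤ) : K) from by push_cast; ring]
          exact Int.cast_ne_zero.mpr (by omega))]
      push_cast
      ring
  -- the two extra normalizations
  have hR23 : Rres n A 2 3 = 0 := by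
    have hz1 : z1 2 3 = 1 := by unfold z1; rw [if_pos ⟨rfl, rfl⟩]
    have hz2 : z2 2 3 = 0 := by unfold z2; split_ifs <;> first | rfl | (exfalso; omega)
    unfold Rres c1v
    rw [hz1, hz2]
    push_cast
    ring
  have hR25 : Rres n A 2 5 = 0 := by
    have hz1 : z1 2 5 = 0 := by unfold z1; split_ifs <;> first | rfl | (exfalso; omega)
    have hz2 : z2 2 5 = 1 := by unfold z2; rw [if_pos ⟨rfl, rfl⟩]
    unfold Rres c2v
    rw [hz1, hz2]
    push_cast
    ring
  -- apply the key lemma weight by weight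
  have hRzero : ∀ p q : ℤ, Rres n A p q = 0 := by
    intro p q
    have key := keyW n hn (p + q) (fun t => Rres n A t (p + q - t))
      (fun t ht => hRr t _ (by omega))
      (fun t => by
        beta_reduce
        rw [show p + q - (p + q - t) = t from by ring]
        exact hRa _ _)
      (fun i j l hi1 hi2 hj1 hj2 hl1 hl2 hsum => by
        beta_reduce
        have e := hRc i j l hi1 hi2 hj1 hj2 hl1 hl2
        rw [show i + j = p + q - l from by omega, show j + l = p + q - i from by omega,
            show l + i = p + q - j from by omega] at e
        rw [hRa (p + q - l) l, hRa (p + q - i) i, hRa (p + q - j) j] at e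
        linear_combination -e)
      (by simpa using hR1 (p + q - 1))
      (fun hw => by
        beta_reduce
        rw [show p + q - 2 = 3 from by omega]
        exact hR23)
      (fun hw => by
        beta_reduce
        rw [show p + q - 2 = 5 from by omega]
        exact hR25)
    have := key p
    beta_reduce at this
    rw [show p + q - p = q from by ring] at this
    exact this
  intro p q
  have := hRzero p q
  unfold Rres at this
  linear_combination this

end Main

-- ## bridges between `VOmega` and the `ℤ`-world patterns

lemma Tz_fin (n : ℕ) (a : Fin n → Fin n → K) (i j : Fin n) :
    Tz K n a ((i.val : ℤ) + 1) ((j.val : ℤ) + 1) = a i j := by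
  have hi := i.isLt; have hj := j.isLt
  rw [Tz, dif_pos ⟨by omega, by omega, by omega, by omega⟩]
  exact congrArg₂ a (Fin.ext (by simp only [Fin.val_mk]; omega))
    (Fin.ext (by simp only [Fin.val_mk]; omega))

lemma Tz_omega0 (n : ℕ) (hn : 5 ≤ n) :
    Tz K n (VOmega K n 0) = fun p q => ((z0 n p q : ℤ) : K) := by
  funext p q
  by_cases h : 1 ≤ p ∧ p ≤ (n:ℤ) ∧ 1 ≤ q ∧ q ≤ (n:ℤ)
  · rw [Tz, dif_pos h]
    simp only [VOmega, Fin.val_zero, if_true, Fin.val_mk, z0]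
    split_ifs <;> first | (exact congrArg Int.cast (by omega)) | (exfalso; omega) | norm_num
  · rw [Tz, dif_neg h, z0, if_neg (by omega)]
    norm_num

lemma Tz_omega1 (n : ℕ) (hn : 5 ≤ n) :
    Tz K n (VOmega K n 1) = fun p q => ((z1 p q : ℤ) : K) := by
  funext p q
  by_cases h : 1 ≤ p ∧ p ≤ (n:ℤ) ∧ 1 ≤ q ∧ q ≤ (n:ℤ)
  · rw [Tz, dif_pos h]
    simp only [VOmega, Fin.val_one, Fin.val_mk, z1]
    norm_num
    split_ifs <;> first | (exact congrArg Int.cast (by omega)) | (exfalso; omega) | norm_num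
  · rw [Tz, dif_neg h, z1]
    split_ifs <;> first | (exfalso; omega) | norm_num

lemma Tz_omega2 (n : ℕ) (hn : 5 ≤ n) :
    Tz K n (VOmega K n 2) = fun p q => ((z2 p q : ℤ) : K) := by
  funext p q
  by_cases h : 1 ≤ p ∧ p ≤ (n:ℤ) ∧ 1 ≤ q ∧ q ≤ (n:ℤ)
  · rw [Tz, dif_pos h]
    simp only [VOmega, Fin.val_two, Fin.val_mk, z2]
    norm_num
    split_ifs <;> first | (exact congrArg Int.cast (by omega)) | (exfalso; omega) | norm_num
  · rw [Tz, dif_neg h, z2]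
    split_ifs <;> first | (exfalso; omega) | norm_num

lemma vomega0_eval (n : ℕ) (hn : 5 ≤ n) (i j : Fin n) :
    VOmega K n 0 i j = ((z0 n ((i.val : ℤ) + 1) ((j.val : ℤ) + 1) : ℤ) : K) := by
  rw [← Tz_fin n (VOmega K n 0) i j, Tz_omega0 n hn]

lemma vomega1_eval (n : ℕ) (hn : 5 ≤ n) (i j : Fin n) :
    VOmega K n 1 i j = ((z1 ((i.val : ℤ) + 1) ((j.val : ℤ) + 1) : ℤ) : K) := by
  rw [← Tz_fin n (VOmega K n 1) i j, Tz_omega1 n hn]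

lemma vomega2_eval (n : ℕ) (hn : 5 ≤ n) (i j : Fin n) :
    VOmega K n 2 i j = ((z2 ((i.val : ℤ) + 1) ((j.val : ℤ) + 1) : ℤ) : K) := by
  rw [← Tz_fin n (VOmega K n 2) i j, Tz_omega2 n hn]

lemma sum_Vc_f (n : ℕ) (f : ℤ → K) (hf : ∀ w, (n:ℤ) < w → f w = 0) (i j : Fin n) :
    (∑ m, Vc K n i j m * f ((m.val : ℤ) + 1))
      = ZdfF K n f ((i.val : ℤ) + 1) ((j.val : ℤ) + 1) := by
  have hi := i.isLt; have hj := j.isLt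
  rw [sum_Vc, ZdfF]
  rw [if_pos ⟨by omega, by omega, by omega, by omega⟩]
  by_cases hc2 : i.val + j.val + 1 < n
  · rw [dif_pos hc2]
    simp only [Fin.val_mk]
    rw [show ((((i.val + j.val + 1 : ℕ) : ℤ)) + 1) = ((i.val:ℤ)+1) + ((j.val:ℤ)+1) from by
      push_cast; ring]
    congr 1
    exact congrArg Int.cast (by ring)
  · rw [dif_neg hc2, hf _ (by omega), mul_zero]

-- ## part (iii) evaluation helpers

lemma z1_eval (p q : ℤ) : z1 p q = if p = 2 ∧ q = 3 then 1
    else if p = 3 ∧ q = 2 then -1 else 0 := rfl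

end S


open S in
/-- For `n ≥ 5`, the classes of `Ω_{n+1}`, `e²∧e³` and
`e²∧e⁵ - 3e³∧e⁴` form a basis of `H²(𝒱ₙ; K)`; in particular `dim H²(𝒱ₙ) = 3`:
(i) each is a cocycle; (ii) every antisymmetric closed 2-form is a linear
combination of them plus a coboundary; (iii) they are independent modulo
coboundaries. -/
theorem stmt11 (K : Type*) [Field K] [CharZero K] (n : ℕ) (hn : 5 ≤ n) :
    (∀ k, VClosed K n (VOmega K n k)) ∧
    (∀ a : Fin n → Fin n → K, (∀ i j, a i j = - a j i) → VClosed K n a →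
      ∃ (coef : Fin 3 → K) (f : Fin n → K),
        ∀ i j, a i j = (∑ k, coef k * VOmega K n k i j) + ∑ m, Vc K n i j m * f m) ∧
    (∀ (coef : Fin 3 → K) (f : Fin n → K),
      (∀ i j, (∑ k, coef k * VOmega K n k i j) = ∑ m, Vc K n i j m * f m) →
      coef = 0) := by
  have hnz : ((n : K) - 1) ≠ 0 := by
    rw [show (n:K) - 1 = (((n:ℤ) - 1 : ℤ) : K) from by push_cast; ring]
    exact Int.cast_ne_zero.mpr (by omega)
  refine ⟨?_, ?_, ?_⟩
  · -- part (i)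
    intro k
    apply vclosed_of
    obtain ⟨kv, hk⟩ := k
    interval_cases kv
    · rw [show (⟨0, hk⟩ : Fin 3) = 0 from rfl, Tz_omega0 n hn]; exact EZ_z0 n
    · rw [show (⟨1, hk⟩ : Fin 3) = 1 from rfl, Tz_omega1 n hn]; exact EZ_z1 n
    · rw [show (⟨2, hk⟩ : Fin 3) = 2 from rfl, Tz_omega2 n hn]; exact EZ_z2 n
  · -- part (ii)
    intro a ha hc
    have hA0 : ∀ p q : ℤ, ¬(1 ≤ p ∧ p ≤ (n:ℤ) ∧ 1 ≤ q ∧ q ≤ (n:ℤ)) → Tz K n a p q = 0 :=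
      fun p q h => by rw [Tz, dif_neg h]
    have hAa : ∀ p q : ℤ, Tz K n a p q = - Tz K n a q p := by
      intro p q
      by_cases h : 1 ≤ p ∧ p ≤ (n:ℤ) ∧ 1 ≤ q ∧ q ≤ (n:ℤ)
      · rw [Tz, Tz, dif_pos h, dif_pos ⟨h.2.2.1, h.2.2.2, h.1, h.2.1⟩]
        exact ha _ _
      · rw [Tz, Tz, dif_neg h, dif_neg (by omega), neg_zero]
    have hAc := vclosed_to n a hc
    have main := mainZ n hn (Tz K n a) hA0 hAa hAc
    refine ⟨![c0v n (Tz K n a), c1v n (Tz K n a), c2v n (Tz K n a)],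
      fun m => fv n (Tz K n a) ((m.val : ℤ) + 1), fun i j => ?_⟩
    have H := main ((i.val : ℤ) + 1) ((j.val : ℤ) + 1)
    rw [Tz_fin] at H
    rw [H, Fin.sum_univ_three]
    simp only [Matrix.cons_val_zero, Matrix.cons_val_one, Matrix.head_cons,
      Matrix.cons_val_two, Matrix.tail_cons]
    rw [vomega0_eval n hn, vomega1_eval n hn, vomega2_eval n hn,
      sum_Vc_f n _ (fv_support n (Tz K n a)) i j]
  · -- part (iii)
    intro coef f h
    -- abbreviations for the needed indices
    have h1 := h ⟨0, by omega⟩ ⟨n - 1, by omega⟩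
    have h2 := h ⟨0, by omega⟩ ⟨3, by omega⟩
    have h3 := h ⟨1, by omega⟩ ⟨2, by omega⟩
    have h4 := h ⟨1, by omega⟩ ⟨4, by omega⟩
    have h5 := h ⟨2, by omega⟩ ⟨3, by omega⟩
    rw [Fin.sum_univ_three] at h1 h2 h3 h4 h5
    rw [vomega0_eval n hn, vomega1_eval n hn, vomega2_eval n hn, sum_Vc] at h1 h2 h3 h4 h5
    simp only [Fin.val_mk] at h1 h2 h3 h4 h5
    -- evaluate the z's
    rw [show z0 n (((0:ℕ):ℤ)+1) (((n-1:ℕ):ℤ)+1) = (n:ℤ) - 1 from by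
        rw [z0, if_pos ⟨by omega, by omega, by omega, by omega, by omega⟩]; omega,
      show z1 (((0:ℕ):ℤ)+1) (((n-1:ℕ):ℤ)+1) = 0 from by
        rw [z1]; split_ifs <;> first | rfl | (exfalso; omega),
      show z2 (((0:ℕ):ℤ)+1) (((n-1:ℕ):ℤ)+1) = 0 from by
        rw [z2]; split_ifs <;> first | rfl | (exfalso; omega),
      dif_neg (show ¬ ((0:ℕ) + (n-1) + 1 < n) from by omega)] at h1
    rw [show z0 n (((0:ℕ):ℤ)+1) (((3:ℕ):ℤ)+1) = 0 from by
        rw [z0]; split_ifs <;> first | rfl | (exfalso; omega),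
      show z1 (((0:ℕ):ℤ)+1) (((3:ℕ):ℤ)+1) = 0 from by
        rw [z1]; split_ifs <;> first | rfl | (exfalso; omega),
      show z2 (((0:ℕ):ℤ)+1) (((3:ℕ):ℤ)+1) = 0 from by
        rw [z2]; split_ifs <;> first | rfl | (exfalso; omega),
      dif_pos (show (0:ℕ) + 3 + 1 < n from by omega)] at h2
    rw [show z0 n (((1:ℕ):ℤ)+1) (((2:ℕ):ℤ)+1) = 0 from by
        rw [z0]; split_ifs <;> first | rfl | (exfalso; omega),
      show z1 (((1:ℕ):ℤ)+1) (((2:ℕ):ℤ)+1) = 1 from by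
        rw [z1, if_pos ⟨by norm_num, by norm_num⟩],
      show z2 (((1:ℕ):ℤ)+1) (((2:ℕ):ℤ)+1) = 0 from by
        rw [z2]; split_ifs <;> first | rfl | (exfalso; omega),
      dif_pos (show (1:ℕ) + 2 + 1 < n from by omega)] at h3
    rw [show z1 (((1:ℕ):ℤ)+1) (((4:ℕ):ℤ)+1) = 0 from by
        rw [z1]; split_ifs <;> first | rfl | (exfalso; omega),
      show z2 (((1:ℕ):ℤ)+1) (((4:ℕ):ℤ)+1) = 1 from by
        rw [z2, if_pos ⟨by norm_num, by norm_num⟩]] at h4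
    rw [show z1 (((2:ℕ):ℤ)+1) (((3:ℕ):ℤ)+1) = 0 from by
        rw [z1]; split_ifs <;> first | rfl | (exfalso; omega),
      show z2 (((2:ℕ):ℤ)+1) (((3:ℕ):ℤ)+1) = -3 from by
        rw [z2]; split_ifs <;> first | rfl | (exfalso; omega)] at h5
    push_cast at h1 h2 h3 h4 h5
    -- coef 0 = 0
    have hc0 : coef 0 = 0 := by
      have : coef 0 * ((n:K) - 1) = 0 := by linear_combination h1
      exact (mul_eq_zero.mp this).resolve_right hnz
    -- f at index 4 vanishes
    have hf4 : f ⟨0 + 3 + 1, by omega⟩ = 0 := by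
      have h3' : (3:K) * f ⟨0 + 3 + 1, by omega⟩ = 0 := by linear_combination -h2
      have := (mul_eq_zero.mp h3').resolve_left (by norm_num)
      exact this
    have hc1 : coef 1 = 0 := by
      have e45 : (⟨1 + 2 + 1, by omega⟩ : Fin n) = ⟨0 + 3 + 1, by omega⟩ := rfl
      rw [e45] at h3
      rw [hf4] at h3
      rw [hc0] at h3
      linear_combination h3
    have hc2 : coef 2 = 0 := by
      by_cases h6 : 1 + 4 + 1 < n
      · rw [dif_pos h6] at h4
        rw [dif_pos (show 2 + 3 + 1 < n from by omega)] at h5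
        have e66 : (⟨2 + 3 + 1, by omega⟩ : Fin n) = ⟨1 + 4 + 1, h6⟩ := rfl
        rw [e66] at h5
        rw [hc0] at h4 h5
        have h10 : (10:K) * coef 2 = 0 := by linear_combination h4 - 3 * h5
        exact (mul_eq_zero.mp h10).resolve_left (by norm_num)
      · rw [dif_neg (show ¬ (2 + 3 + 1 < n) from by omega)] at h5
        rw [hc0] at h5
        have : (-3:K) * coef 2 = 0 := by linear_combination h5
        have := (mul_eq_zero.mp this).resolve_left (by norm_num)
        exact this
    funext k
    obtain ⟨kv, hk⟩ := k
    interval_cases kv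
    · exact hc0
    · exact hc1
    · exact hc2
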